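/- arXiv:1210.6585 — 2 statements merged into one kernel-verified Lean document; each statement's English description precedes it below -/
import Mathlib

section
/- With notation as above, the map ψ_a defined on generators by ψ_a(e) = p(a, ιe) · e · p(ιe, a) extends to an endomorphism of H', and for any directed path (e₁,…,e_l) from b to b' and any nonzero integer n, ψ_a(e₁ⁿ⋯e_lⁿ) = p(a,b) · e₁ⁿ⁺¹⋯e_lⁿ⁺¹ · p(b',a). -/
open FreeGroup PresentedGroup

variable {V : Type*}

/-- A directed cycle in a simple graph: a nonempty list of darts, consecutive
(cyclically) darts matching head to tail. -/
def IsDirectedCycle (G : SimpleGraph V) (c : List G.Dart) : Prop :=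
  c ≠ [] ∧ ∀ i : Fin c.length,
    (c.get i).toProd.2 = (c.get ⟨(i + 1) % c.length, Nat.mod_lt _ i.pos⟩).toProd.1

/-- The word `e₁ⁿ ⋯ e_lⁿ` in the free group on the darts. -/
def cycleWord {G : SimpleGraph V} (c : List G.Dart) (n : ℤ) : FreeGroup G.Dart :=
  (c.map (fun e => FreeGroup.of e ^ n)).prod

/-- The relators of `H'`. -/
def cycleRels (G : SimpleGraph V) : Set (FreeGroup G.Dart) :=
  {w | ∃ (c : List G.Dart) (n : ℤ), IsDirectedCycle G c ∧ n ≠ 0 ∧ w = cycleWord c n}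

/-- A directed edge path from `a` to `b`. -/
def IsDirectedPath (G : SimpleGraph V) (a b : V) (p : List G.Dart) : Prop :=
  p.Chain' (fun d d' => d.toProd.2 = d'.toProd.1) ∧
  (∀ d ∈ p.head?, d.toProd.1 = a) ∧ (∀ d ∈ p.getLast?, d.toProd.2 = b) ∧
  (p = [] → a = b)

/-- The word of a path in the free group on darts. -/
def pathWord {G : SimpleGraph V} (p : List G.Dart) : FreeGroup G.Dart :=
  (p.map FreeGroup.of).prod

section Aux
variable {G : SimpleGraph V}

lemma pathWord_append (p q : List G.Dart) :
    pathWord (p ++ q) = pathWord p * pathWord q := by simp [pathWord]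

lemma cycleWord_cons (e : G.Dart) (p : List G.Dart) (n : ℤ) :
    cycleWord (e :: p) n = FreeGroup.of e ^ n * cycleWord p n := by simp [cycleWord]

lemma cycleWord_one (p : List G.Dart) : cycleWord p 1 = pathWord p := by
  simp [cycleWord, pathWord]

lemma cycleWord_zero (p : List G.Dart) : cycleWord p 0 = 1 := by
  simp [cycleWord]

lemma isDirectedPath_nil (b : V) : IsDirectedPath G b b [] := by
  refine ⟨List.isChain_nil, ?_, ?_, fun _ => rfl⟩ <;> simp

lemma isDirectedPath_single (e : G.Dart) :
    IsDirectedPath G e.toProd.1 e.toProd.2 [e] := by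
  refine ⟨List.isChain_singleton _, ?_, ?_, ?_⟩ <;> simp

lemma path_cons {b b' : V} {e : G.Dart} {p : List G.Dart}
    (h : IsDirectedPath G b b' (e :: p)) :
    b = e.toProd.1 ∧ IsDirectedPath G e.toProd.2 b' p := by
  obtain ⟨hc, hh, hl, -⟩ := h
  refine ⟨(hh e rfl).symm, hc.tail, ?_, ?_, ?_⟩
  · intro d hd
    cases p with
    | nil => simp at hd
    | cons d' rest =>
      simp only [List.head?_cons, Option.mem_some_iff] at hd
      subst hd
      exact ((List.isChain_cons_cons.1 hc).1).symm
  · intro d hd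
    cases p with
    | nil => simp at hd
    | cons d' rest => exact hl d (by rw [List.getLast?_cons_cons]; exact hd)
  · intro hp; subst hp
    exact hl e rfl

lemma IsDirectedPath.append {b c d : V} {p q : List G.Dart}
    (hp : IsDirectedPath G b c p) (hq : IsDirectedPath G c d q) :
    IsDirectedPath G b d (p ++ q) := by
  obtain ⟨hc1, hh1, hl1, he1⟩ := hp
  obtain ⟨hc2, hh2, hl2, he2⟩ := hq
  refine ⟨List.isChain_append.2 ⟨hc1, hc2, fun x hx y hy => by rw [hl1 x hx, ← hh2 y hy]⟩,
    ?_, ?_, ?_⟩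
  · cases p with
    | nil => intro d' hd'; rw [he1 rfl]; exact hh2 d' hd'
    | cons x xs => intro d' hd'; simp only [List.cons_append, List.head?_cons,
        Option.mem_some_iff] at hd'; subst hd'; exact hh1 _ rfl
  · cases q with
    | nil => intro d' hd'; rw [← he2 rfl]; rw [List.append_nil] at hd'; exact hl1 d' hd'
    | cons x xs =>
      intro d' hd'
      obtain ⟨y, hy⟩ := Option.isSome_iff_exists.1 (List.getLast?_isSome.2 (List.cons_ne_nil x xs))
      rw [List.getLast?_append, hy] at hd'
      simp only [Option.some_or, Option.mem_some_iff] at hd'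
      subst hd'
      exact hl2 _ hy
  · intro h
    obtain ⟨h1, h2⟩ := List.append_eq_nil_iff.1 h
    exact (he1 h1).trans (he2 h2)

lemma walk_isDirectedPath {u v : V} (w : G.Walk u v) : IsDirectedPath G u v w.darts := by
  induction w with
  | nil => exact isDirectedPath_nil _
  | cons h p ih =>
    rw [SimpleGraph.Walk.darts_cons, ← List.singleton_append]
    exact (isDirectedPath_single _).append ih

lemma exists_dpath (hconn : G.Connected) (u v : V) : ∃ p, IsDirectedPath G u v p :=
  ⟨(hconn.preconnected u v).some.darts, walk_isDirectedPath _⟩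

lemma isDirectedCycle_of_path {b : V} {p : List G.Dart} (hne : p ≠ [])
    (hp : IsDirectedPath G b b p) : IsDirectedCycle G p := by
  obtain ⟨hc, hh, hl, -⟩ := hp
  refine ⟨hne, fun i => ?_⟩
  rcases lt_or_eq_of_le (Nat.succ_le_of_lt i.isLt) with h | h
  · have := List.isChain_iff_getElem.1 hc i (by omega)
    have hmod : ((i : ℕ) + 1) % p.length = (i : ℕ) + 1 := Nat.mod_eq_of_lt h
    simp only [hmod]
    convert this using 3 <;> simp
  · have h' : (i : ℕ) + 1 = p.length := h
    have h1 : (p.getLast hne).toProd.2 = b := hl _ (List.getLast?_eq_getLast hne)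
    have h2 : (p.head hne).toProd.1 = b := hh _ (List.head?_eq_head hne)
    have e1 : p.get i = p.getLast hne := by
      rw [List.getLast_eq_getElem]
      exact congrArg p.get (Fin.ext (by simp; omega))
    have e2 : p.get ⟨((i : ℕ) + 1) % p.length, Nat.mod_lt _ i.pos⟩ = p.head hne := by
      have h0 : ((i : ℕ) + 1) % p.length = 0 := by rw [h', Nat.mod_self]
      rw [List.head_eq_getElem]
      exact congrArg p.get (Fin.ext (by simp [h0]))
    rw [e1, e2, h1, h2]

lemma isDirectedPath_of_cycle {c : List G.Dart} (hc : IsDirectedCycle G c) :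
    IsDirectedPath G (c.head hc.1).toProd.1 (c.head hc.1).toProd.1 c := by
  obtain ⟨hne, h⟩ := hc
  refine ⟨List.isChain_iff_getElem.2 fun i hi => ?_, ?_, ?_, fun h' => absurd h' hne⟩
  · have := h ⟨i, by omega⟩
    have hmod : (i + 1) % c.length = i + 1 := Nat.mod_eq_of_lt (by omega)
    simp only [hmod] at this
    convert this using 3 <;> simp
  · intro d hd
    rw [List.head?_eq_head hne] at hd
    obtain rfl := Option.mem_some_iff.1 hd
    rfl
  · intro d hd
    rw [List.getLast?_eq_getLast hne] at hd
    obtain rfl := Option.mem_some_iff.1 hd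
    have := h ⟨c.length - 1, by have := List.length_pos_iff.2 hne; omega⟩
    have h0 : (c.length - 1 + 1) % c.length = 0 := by
      have := List.length_pos_iff.2 hne
      rw [Nat.sub_add_cancel (by omega), Nat.mod_self]
    rw [List.getLast_eq_getElem]
    rw [List.head_eq_getElem]
    simp only [h0] at this
    convert this using 3 <;> simp

lemma mk_rel {w : FreeGroup G.Dart} (hw : w ∈ cycleRels G) :
    PresentedGroup.mk (cycleRels G) w = 1 :=
  (QuotientGroup.eq_one_iff w).2 (Subgroup.subset_normalClosure hw)

lemma mk_pathWord_mul {b b' : V} {p q : List G.Dart}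
    (hp : IsDirectedPath G b b' p) (hq : IsDirectedPath G b' b q) :
    PresentedGroup.mk (cycleRels G) (pathWord p) *
      PresentedGroup.mk (cycleRels G) (pathWord q) = 1 := by
  rcases eq_or_ne (p ++ q) [] with h | h
  · obtain ⟨h1, h2⟩ := List.append_eq_nil_iff.1 h
    subst h1; subst h2
    simp [pathWord]
  · have hcyc := isDirectedCycle_of_path h (hp.append hq)
    have hmem : pathWord (p ++ q) ∈ cycleRels G :=
      ⟨p ++ q, 1, hcyc, one_ne_zero, (cycleWord_one _).symm⟩
    have := mk_rel hmem
    rwa [pathWord_append, _root_.map_mul] at this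

lemma mk_pathWord_unique (hconn : G.Connected) {b b' : V} {p p' : List G.Dart}
    (hp : IsDirectedPath G b b' p) (hp' : IsDirectedPath G b b' p') :
    PresentedGroup.mk (cycleRels G) (pathWord p) =
      PresentedGroup.mk (cycleRels G) (pathWord p') := by
  obtain ⟨q, hq⟩ := exists_dpath hconn b' b
  exact mul_right_cancel ((mk_pathWord_mul hp hq).trans (mk_pathWord_mul hp' hq).symm)

lemma telescope (g : V → PresentedGroup (cycleRels G))
    (hg : ∀ e : G.Dart, g e.toProd.2 = g e.toProd.1 *
      PresentedGroup.mk (cycleRels G) (FreeGroup.of e)) :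
    ∀ (p : List G.Dart) (b b' : V), IsDirectedPath G b b' p → ∀ n : ℤ,
      FreeGroup.lift (fun e => g e.toProd.1 *
          PresentedGroup.mk (cycleRels G) (FreeGroup.of e) * (g e.toProd.1)⁻¹)
        (cycleWord p n)
      = g b * PresentedGroup.mk (cycleRels G) (cycleWord p (n + 1)) * (g b')⁻¹ := by
  intro p
  induction p with
  | nil =>
    intro b b' h n
    obtain rfl := h.2.2.2 rfl
    simp [cycleWord]
  | cons e rest ih =>
    intro b b' h n
    obtain ⟨rfl, hrest⟩ := path_cons h
    rw [cycleWord_cons, _root_.map_mul, _root_.map_zpow, FreeGroup.lift_apply_of, conj_zpow,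
      ih _ _ hrest n, hg e, cycleWord_cons, _root_.map_mul, _root_.map_zpow]
    group

end Aux

/-- For a fixed basepoint `a` of a connected graph, the assignment
`ψ_a(e) = p(a, ιe) · e · p(ιe, a)` extends to an endomorphism of `H'`, and for any directed
path `(e₁,…,e_l)` from `b` to `b'` and any nonzero integer `n`,
`ψ_a(e₁ⁿ⋯e_lⁿ) = p(a,b) · e₁ⁿ⁺¹⋯e_lⁿ⁺¹ · p(b',a)`. -/
theorem exists_psi_endomorphism {V : Type*} [Fintype V] (G : SimpleGraph V)
    (hconn : G.Connected) (a : V) :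
    ∃ ψ : PresentedGroup (cycleRels G) →* PresentedGroup (cycleRels G),
      (∀ e : G.Dart, ∀ P Q : List G.Dart,
        IsDirectedPath G a e.toProd.1 P → IsDirectedPath G e.toProd.1 a Q →
        ψ (PresentedGroup.of e) =
          PresentedGroup.mk (cycleRels G) (pathWord P) * PresentedGroup.of e *
            PresentedGroup.mk (cycleRels G) (pathWord Q)) ∧
      (∀ (b b' : V) (p : List G.Dart), IsDirectedPath G b b' p → ∀ n : ℤ, n ≠ 0 →
        ∀ P Q : List G.Dart, IsDirectedPath G a b P → IsDirectedPath G b' a Q →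
        ψ (PresentedGroup.mk (cycleRels G) (cycleWord p n)) =
          PresentedGroup.mk (cycleRels G) (pathWord P) *
            PresentedGroup.mk (cycleRels G) (cycleWord p (n + 1)) *
            PresentedGroup.mk (cycleRels G) (pathWord Q)) := by
  classical
  choose P0 hP0 using fun v => exists_dpath hconn a v
  set g : V → PresentedGroup (cycleRels G) :=
    fun v => PresentedGroup.mk (cycleRels G) (pathWord (P0 v)) with hgdef
  have hg : ∀ e : G.Dart, g e.toProd.2 = g e.toProd.1 *
      PresentedGroup.mk (cycleRels G) (FreeGroup.of e) := by
    intro e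
    have h1 : IsDirectedPath G a e.toProd.2 (P0 e.toProd.1 ++ [e]) :=
      (hP0 _).append (isDirectedPath_single e)
    have h2 := mk_pathWord_unique hconn (hP0 e.toProd.2) h1
    rw [hgdef]
    simp only []
    rw [h2, pathWord_append, _root_.map_mul]
    congr 1
  have hrel : ∀ r ∈ cycleRels G, FreeGroup.lift (fun e => g e.toProd.1 *
      PresentedGroup.mk (cycleRels G) (FreeGroup.of e) * (g e.toProd.1)⁻¹) r = 1 := by
    rintro r ⟨c, n, hc, hn, rfl⟩
    rw [telescope g hg c _ _ (isDirectedPath_of_cycle hc) n]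
    rcases eq_or_ne (n + 1) 0 with h | h
    · rw [h, cycleWord_zero, _root_.map_one]
      group
    · rw [mk_rel ⟨c, n + 1, hc, h, rfl⟩]
      group
  refine ⟨PresentedGroup.toGroup hrel, ?_, ?_⟩
  · intro e Pp Qq hPp hQq
    have h1 : PresentedGroup.mk (cycleRels G) (pathWord Pp) = g e.toProd.1 :=
      mk_pathWord_unique hconn hPp (hP0 _)
    have h2 : PresentedGroup.mk (cycleRels G) (pathWord Qq) = (g e.toProd.1)⁻¹ :=
      (inv_eq_of_mul_eq_one_right (mk_pathWord_mul (hP0 e.toProd.1) hQq)).symm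
    rw [h1, h2]
    exact PresentedGroup.toGroup.of hrel
  · intro b b' p hp n hn Pp Qq hPp hQq
    have hcomm : PresentedGroup.toGroup hrel (PresentedGroup.mk (cycleRels G) (cycleWord p n))
        = FreeGroup.lift (fun e => g e.toProd.1 *
            PresentedGroup.mk (cycleRels G) (FreeGroup.of e) * (g e.toProd.1)⁻¹)
          (cycleWord p n) := by
      have hext : (PresentedGroup.toGroup hrel).comp (PresentedGroup.mk (cycleRels G))
          = FreeGroup.lift (fun e => g e.toProd.1 *
              PresentedGroup.mk (cycleRels G) (FreeGroup.of e) * (g e.toProd.1)⁻¹) := by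
        apply FreeGroup.ext_hom
        intro x
        simp only [MonoidHom.comp_apply, FreeGroup.lift_apply_of]
        exact PresentedGroup.toGroup.of hrel
      exact DFunLike.congr_fun hext _
    rw [hcomm, telescope g hg p b b' hp n]
    have h1 : PresentedGroup.mk (cycleRels G) (pathWord Pp) = g b :=
      mk_pathWord_unique hconn hPp (hP0 b)
    have h2 : PresentedGroup.mk (cycleRels G) (pathWord Qq) = (g b')⁻¹ :=
      (inv_eq_of_mul_eq_one_right (mk_pathWord_mul (hP0 b') hQq)).symm
    rw [h1, h2]
end

section
/- Let Δ be a finite flag complex with nonempty vertex set, G_Δ its right-angled Artin group, and φ: G_Δ → ℤ the homomorphism sending every vertex generator to 1. Then φ is surjective, and its kernel H_Δ is generated by the elements v·w⁻¹ over all pairs of adjacent vertices v, w, provided the 1-skeleton of Δ is connected. -/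
/-- The commutator relators of the right-angled Artin group of a graph. -/
def raagRels {V : Type*} (G : SimpleGraph V) : Set (FreeGroup V) :=
  {w | ∃ v v', G.Adj v v' ∧
    w = FreeGroup.of v * FreeGroup.of v' * (FreeGroup.of v)⁻¹ * (FreeGroup.of v')⁻¹}

/-- The right-angled Artin group of (the flag complex determined by) a graph. -/
abbrev Raag {V : Type*} (G : SimpleGraph V) := PresentedGroup (raagRels G)

section Aux

variable {V : Type*} {G : SimpleGraph V}

/-- Adjacent generators commute in the RAAG. -/
lemma raag_commute {v w : V} (h : G.Adj v w) :
    Commute (PresentedGroup.of (rels := raagRels G) v) (PresentedGroup.of (rels := raagRels G) w) := by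
  have hrel : (FreeGroup.of v * FreeGroup.of w * (FreeGroup.of v)⁻¹ * (FreeGroup.of w)⁻¹ :
      FreeGroup V) ∈ Subgroup.normalClosure (raagRels G) :=
    Subgroup.subset_normalClosure ⟨v, w, h, rfl⟩
  have h1 : (PresentedGroup.mk (raagRels G))
      (FreeGroup.of v * FreeGroup.of w * (FreeGroup.of v)⁻¹ * (FreeGroup.of w)⁻¹) = 1 :=
    (QuotientGroup.eq_one_iff _).mpr hrel
  have h2 : PresentedGroup.of (rels := raagRels G) v * PresentedGroup.of w *
      (PresentedGroup.of v)⁻¹ * (PresentedGroup.of w)⁻¹ = 1 := by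
    simpa [PresentedGroup.of] using h1
  exact commutatorElement_eq_one_iff_commute.mp (by simpa [commutatorElement_def] using h2)

variable (G) in
/-- The edge-difference generating set. -/
def raagEdgeSet : Set (Raag G) :=
  {x : Raag G | ∃ v w : V, G.Adj v w ∧
    x = PresentedGroup.of v * (PresentedGroup.of w)⁻¹}

lemma mem_closure_of_walk {v w : V} (p : G.Walk v w) :
    PresentedGroup.of v * (PresentedGroup.of w)⁻¹ ∈ Subgroup.closure (raagEdgeSet G) := by
  induction p with
  | nil => simpa using one_mem _
  | cons h p ih =>
      rename_i a b c
      have hab : PresentedGroup.of a * (PresentedGroup.of b)⁻¹ ∈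
          Subgroup.closure (raagEdgeSet G) :=
        Subgroup.subset_closure ⟨a, b, h, rfl⟩
      have := mul_mem hab ih
      simpa [mul_assoc] using this

lemma mem_closure_of_walk' {v w : V} (p : G.Walk v w) :
    (PresentedGroup.of v)⁻¹ * PresentedGroup.of w ∈ Subgroup.closure (raagEdgeSet G) := by
  induction p with
  | nil => simpa using one_mem _
  | cons h p ih =>
      rename_i a b c
      have hab : (PresentedGroup.of a)⁻¹ * PresentedGroup.of b ∈
          Subgroup.closure (raagEdgeSet G) := by
        rw [(raag_commute h).inv_left.eq]
        exact Subgroup.subset_closure ⟨b, a, h.symm, rfl⟩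
      have := mul_mem hab ih
      simpa [mul_assoc] using this

end Aux

/-- For a finite flag complex with nonempty vertex set, the homomorphism `φ : G_Δ → ℤ`
sending every vertex generator to `1` is surjective, and if the 1-skeleton is connected its
kernel `H_Δ` is generated by the elements `v·w⁻¹` over adjacent pairs of vertices. -/
theorem surjective_and_ker_generated_by_edges {V : Type*} [Fintype V] [Nonempty V]
    (G : SimpleGraph V) (φ : Raag G →* Multiplicative ℤ)
    (hφ : ∀ v : V, φ (PresentedGroup.of v) = Multiplicative.ofAdd 1) :
    Function.Surjective φ ∧
      (G.Connected →
        Subgroup.closure {x : Raag G | ∃ v w : V, G.Adj v w ∧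
            x = PresentedGroup.of v * (PresentedGroup.of w)⁻¹} = φ.ker) := by
  obtain ⟨v₀⟩ := ‹Nonempty V›
  constructor
  · -- surjectivity
    intro n
    refine ⟨(PresentedGroup.of v₀ : Raag G) ^ (Multiplicative.toAdd n), ?_⟩
    rw [map_zpow, hφ]
    simp [← ofAdd_zsmul]
  · intro hconn
    have hS : {x : Raag G | ∃ v w : V, G.Adj v w ∧
        x = PresentedGroup.of v * (PresentedGroup.of w)⁻¹} = raagEdgeSet G := rfl
    rw [hS]
    set K := Subgroup.closure (raagEdgeSet G) with hK
    have hmem1 : ∀ v w : V, PresentedGroup.of v * (PresentedGroup.of w)⁻¹ ∈ K := fun v w =>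
      mem_closure_of_walk ((hconn v w).some
        )
    have hmem2 : ∀ v w : V, (PresentedGroup.of v)⁻¹ * PresentedGroup.of w ∈ K := fun v w =>
      mem_closure_of_walk' ((hconn v w).some)
    -- K is normal
    have hnormal : K.Normal := by
      constructor
      intro k hk g
      -- the set of g with both-sided conjugation property is a subgroup
      let T : Subgroup (Raag G) :=
        { carrier := {g : Raag G | (∀ k ∈ K, g * k * g⁻¹ ∈ K) ∧ (∀ k ∈ K, g⁻¹ * k * g ∈ K)}
          one_mem' := by constructor <;> intro k hk <;> simpa using hk
          mul_mem' := by
            rintro a b ⟨ha1, ha2⟩ ⟨hb1, hb2⟩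
            constructor
            · intro k hk
              have := ha1 _ (hb1 k hk)
              simpa [mul_assoc] using this
            · intro k hk
              have := hb2 _ (ha2 k hk)
              simpa [mul_assoc] using this
          inv_mem' := by
            rintro a ⟨ha1, ha2⟩
            constructor
            · intro k hk; simpa using ha2 k hk
            · intro k hk; simpa using ha1 k hk }
      have hgen : ∀ u : V, (PresentedGroup.of u : Raag G) ∈ T := by
        intro u
        -- it suffices to conjugate the generators
        have key : ∀ (c : Raag G), (∀ s ∈ raagEdgeSet G, c * s * c⁻¹ ∈ K) →
            ∀ k ∈ K, c * k * c⁻¹ ∈ K := by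
          intro c hc k hk
          have : K.map (MulAut.conj c).toMonoidHom ≤ K := by
            rw [hK, MonoidHom.map_closure, Subgroup.closure_le]
            rintro x ⟨s, hs, rfl⟩
            exact hc s hs
          exact this ⟨k, hk, rfl⟩
        constructor
        · refine key _ ?_
          rintro s ⟨a, b, hab, rfl⟩
          have heq : PresentedGroup.of (rels := raagRels G) u *
              (PresentedGroup.of a * (PresentedGroup.of b)⁻¹) * (PresentedGroup.of u)⁻¹
              = (PresentedGroup.of u * (PresentedGroup.of b)⁻¹) *
                (PresentedGroup.of a * (PresentedGroup.of u)⁻¹) := by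
            rw [(raag_commute hab).inv_right.eq]
            group
          rw [heq]
          exact mul_mem (hmem1 u b) (hmem1 a u)
        · -- conjugation by (of u)⁻¹
          intro k hk
          have key' : ∀ s ∈ raagEdgeSet G,
              (PresentedGroup.of u : Raag G)⁻¹ * s * PresentedGroup.of u ∈ K := by
            rintro s ⟨a, b, hab, rfl⟩
            have heq : (PresentedGroup.of (rels := raagRels G) u)⁻¹ *
                (PresentedGroup.of a * (PresentedGroup.of b)⁻¹) * PresentedGroup.of u
                = ((PresentedGroup.of u)⁻¹ * PresentedGroup.of a) *
                  ((PresentedGroup.of b)⁻¹ * PresentedGroup.of u) := by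
              group
            rw [heq]
            have h2 : ((PresentedGroup.of (rels := raagRels G) b)⁻¹ * PresentedGroup.of u) ∈ K := by
              have := (Subgroup.inv_mem_iff K).mpr (hmem2 u b)
              simpa using this
            exact mul_mem (hmem2 u a) h2
          have : K.map (MulAut.conj ((PresentedGroup.of u : Raag G)⁻¹)).toMonoidHom ≤ K := by
            rw [hK, MonoidHom.map_closure, Subgroup.closure_le]
            rintro x ⟨s, hs, rfl⟩
            simpa using key' s hs
          have := this ⟨k, hk, rfl⟩
          simpa using this
      have hgT : g ∈ T := PresentedGroup.generated_by _ T hgen g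
      exact hgT.1 k hk
    -- quotient argument
    haveI := hnormal
    apply le_antisymm
    · rw [Subgroup.closure_le]
      rintro x ⟨v, w, hvw, rfl⟩
      simp only [SetLike.mem_coe, MonoidHom.mem_ker, map_mul, map_inv, hφ]
      group
    · intro g hg
      rw [MonoidHom.mem_ker] at hg
      -- the quotient map and the composite through φ agree
      let π := QuotientGroup.mk' K
      let ψ : Raag G →* Raag G ⧸ K := ((zpowersHom _ (π (PresentedGroup.of v₀)))).comp φ
      have hagree : π = ψ := by
        apply PresentedGroup.ext
        intro v
        show π (PresentedGroup.of v) = zpowersHom _ (π (PresentedGroup.of v₀)) (φ (PresentedGroup.of v))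
        rw [hφ, zpowersHom_apply]
        simp only [toAdd_ofAdd, zpow_one]
        have : ((PresentedGroup.of v : Raag G) : Raag G ⧸ K)
            = ((PresentedGroup.of v₀ : Raag G) : Raag G ⧸ K) := by
          rw [QuotientGroup.eq]
          exact hmem2 v v₀
        exact this
      have : π g = 1 := by
        rw [hagree]
        show zpowersHom _ (π (PresentedGroup.of v₀)) (φ g) = 1
        rw [hg]
        simp
      rwa [← QuotientGroup.ker_mk' K, MonoidHom.mem_ker]
end
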